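/- arXiv:1306.0287 — 6 statements merged into one kernel-verified Lean document; each statement's English description precedes it below -/
import Mathlib

section
/- Let X be a finite-dimensional real vector space and F : X → [0,∞) a function satisfying: (a) F(0) = 0; (b) F(tx) ≤ t²F(x) for every x ∈ X and every t > 0; (c) F(x+y) + F(x−y) ≤ 2F(x) + 2F(y) for every x,y ∈ X. Then F is a quadratic form, i.e. there exists a symmetric bilinear form B on X with F(x) = B(x,x) for all x. -/
/-- a nonnegative function on a finite-dimensional real vector space
with `F 0 = 0`, `F (t•x) ≤ t² F x` for `t > 0`, and the parallelogram inequality,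
is a quadratic form. -/
theorem stmt1 (X : Type*) [AddCommGroup X] [Module ℝ X] [FiniteDimensional ℝ X]
    (F : X → ℝ)
    (hnonneg : ∀ x, 0 ≤ F x)
    (hzero : F 0 = 0)
    (hhom : ∀ x : X, ∀ t : ℝ, 0 < t → F (t • x) ≤ t ^ 2 * F x)
    (hpar : ∀ x y : X, F (x + y) + F (x - y) ≤ 2 * F x + 2 * F y) :
    ∃ B : X →ₗ[ℝ] X →ₗ[ℝ] ℝ, (∀ x y, B x y = B y x) ∧ ∀ x, F x = B x x := by
  -- exact positive homogeneity
  have hsq : ∀ (t : ℝ) (x : X), 0 < t → F (t • x) = t ^ 2 * F x := by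
    intro t x ht
    refine le_antisymm (hhom x t ht) ?_
    have h2 := hhom (t • x) t⁻¹ (inv_pos.mpr ht)
    rw [smul_smul, inv_mul_cancel₀ ht.ne', one_smul] at h2
    have h3 : t ^ 2 * F x ≤ t ^ 2 * (t⁻¹ ^ 2 * F (t • x)) := by
      exact mul_le_mul_of_nonneg_left h2 (by positivity)
    have h4 : t ^ 2 * (t⁻¹ ^ 2 * F (t • x)) = F (t • x) := by
      field_simp
    linarith
  -- F is even
  have hneg : ∀ x : X, F (-x) = F x := by
    intro x
    have h1 := hpar 0 x
    have h2 := hpar 0 (-x)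
    simp only [zero_add, zero_sub, neg_neg, hzero, mul_zero] at h1 h2
    linarith
  -- homogeneity for all reals
  have hsq' : ∀ (t : ℝ) (x : X), F (t • x) = t ^ 2 * F x := by
    intro t x
    rcases lt_trichotomy t 0 with h | h | h
    · have : F (t • x) = F ((-t) • x) := by
        rw [← hneg (t • x)]; congr 1; rw [neg_smul]
      rw [this, hsq (-t) x (by linarith)]; ring_nf
    · simp [h, hzero]
    · exact hsq t x h
  -- parallelogram equality
  have heq : ∀ x y : X, F (x + y) + F (x - y) = 2 * F x + 2 * F y := by
    intro x y
    refine le_antisymm (hpar x y) ?_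
    have h1 := hpar (x + y) (x - y)
    have e1 : (x + y) + (x - y) = (2 : ℝ) • x := by module
    have e2 : (x + y) - (x - y) = (2 : ℝ) • y := by module
    rw [e1, e2, hsq 2 x two_pos, hsq 2 y two_pos] at h1
    norm_num at h1
    linarith
  -- the candidate bilinear form
  set B' : X → X → ℝ := fun x y => (F (x + y) - F (x - y)) / 4 with hB'
  have hzero' : ∀ w : X, B' 0 w = 0 := by
    intro w
    simp only [hB', zero_add, zero_sub, hneg w, sub_self, zero_div]
  have Bsymm : ∀ x y : X, B' x y = B' y x := by
    intro x y
    simp only [hB', add_comm x y]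
    rw [show x - y = -(y - x) by abel, hneg]
  have Bself : ∀ x : X, B' x x = F x := by
    intro x
    simp only [hB', sub_self, hzero]
    rw [show x + x = (2 : ℝ) • x by module, hsq 2 x two_pos]
    ring
  -- key averaging identity
  have key : ∀ u v w : X, B' u w + B' v w = 2 * B' ((2⁻¹ : ℝ) • (u + v)) w := by
    intro u v w
    have k1 := heq ((2⁻¹ : ℝ) • (u + v) + w) ((2⁻¹ : ℝ) • (u - v))
    have e1 : (2⁻¹ : ℝ) • (u + v) + w + (2⁻¹ : ℝ) • (u - v) = u + w := by module
    have e2 : (2⁻¹ : ℝ) • (u + v) + w - (2⁻¹ : ℝ) • (u - v) = v + w := by module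
    rw [e1, e2] at k1
    have k2 := heq ((2⁻¹ : ℝ) • (u + v) - w) ((2⁻¹ : ℝ) • (u - v))
    have e3 : (2⁻¹ : ℝ) • (u + v) - w + (2⁻¹ : ℝ) • (u - v) = u - w := by module
    have e4 : (2⁻¹ : ℝ) • (u + v) - w - (2⁻¹ : ℝ) • (u - v) = v - w := by module
    rw [e3, e4] at k2
    simp only [hB']
    have e5 : ((2⁻¹ : ℝ) • (u + v)) + w = (2⁻¹ : ℝ) • (u + v) + w := rfl
    linarith
  -- additivity in the first variable
  have hadd : ∀ u v w : X, B' (u + v) w = B' u w + B' v w := by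
    intro u v w
    have h1 := key u v w
    have h2 := key (u + v) 0 w
    rw [add_zero, hzero'] at h2
    linarith
  -- rational homogeneity
  have hQ : ∀ (q : ℚ) (x y : X), B' ((q : ℝ) • x) y = (q : ℝ) * B' x y := by
    intro q x y
    have := map_ratCast_smul (AddMonoidHom.mk' (fun x => B' x y) (fun a b => hadd a b y)) ℝ ℝ q x
    simpa using this
  -- Cauchy–Schwarz
  have CS : ∀ x y : X, (B' x y) ^ 2 ≤ F x * F y := by
    intro x y
    have hq : ∀ q : ℚ, 0 ≤ F y * (q : ℝ) ^ 2 + 2 * B' x y * (q : ℝ) + F x := by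
      intro q
      have h0 : (0 : ℝ) ≤ F (x + (q : ℝ) • y) := hnonneg _
      have hadd2 : ∀ u v w : X, B' w (u + v) = B' w u + B' w v := fun u v w => by
        rw [Bsymm, hadd, Bsymm u w, Bsymm v w]
      have expand : F (x + (q : ℝ) • y)
          = F x + 2 * (q : ℝ) * B' x y + (q : ℝ) ^ 2 * F y := by
        calc F (x + (q : ℝ) • y) = B' (x + (q : ℝ) • y) (x + (q : ℝ) • y) :=
              (Bself _).symm
          _ = B' x x + B' x ((q : ℝ) • y) + (B' ((q : ℝ) • y) x + B' ((q : ℝ) • y) ((q : ℝ) • y)) := by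
              rw [hadd, hadd2, hadd2]
          _ = F x + 2 * (q : ℝ) * B' x y + (q : ℝ) ^ 2 * F y := by
              rw [Bself, hQ, hQ, Bsymm x ((q : ℝ) • y), hQ, Bsymm y ((q : ℝ) • y), hQ,
                Bself, Bsymm y x]
              ring
      rw [expand] at h0
      linarith
    have hr : ∀ t : ℝ, 0 ≤ F y * t ^ 2 + 2 * B' x y * t + F x := by
      intro t
      have hcl : IsClosed {t : ℝ | 0 ≤ F y * t ^ 2 + 2 * B' x y * t + F x} :=
        isClosed_le continuous_const
          (((continuous_const.mul (continuous_pow 2)).add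
            (continuous_const.mul continuous_id)).add continuous_const)
      have hsub : Set.range ((↑) : ℚ → ℝ) ⊆
          {t : ℝ | 0 ≤ F y * t ^ 2 + 2 * B' x y * t + F x} := by
        rintro _ ⟨q, rfl⟩; exact hq q
      have hmem : t ∈ closure (Set.range ((↑) : ℚ → ℝ)) :=
        (Rat.denseRange_cast (𝕜 := ℝ)) t
      exact closure_minimal hsub hcl hmem
    have hr' : ∀ t : ℝ, 0 ≤ F y * (t * t) + 2 * B' x y * t + F x := by
      intro t
      have h := hr t
      nlinarith [h]
    have disc := discrim_le_zero hr'
    rw [discrim] at disc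
    nlinarith [disc]
  -- real homogeneity
  have hsmul : ∀ (t : ℝ) (x y : X), B' (t • x) y = t * B' x y := by
    intro t x y
    set c : ℝ := Real.sqrt (F x * F y) with hc
    have hbd : ∀ r : ℝ, |B' (r • x) y| ≤ |r| * c := by
      intro r
      have h1 : |B' (r • x) y| ≤ Real.sqrt (F (r • x) * F y) :=
        Real.abs_le_sqrt (CS (r • x) y)
      have h2 : Real.sqrt (F (r • x) * F y) = |r| * c := by
        rw [hsq' r x, hc, mul_assoc, Real.sqrt_mul (sq_nonneg r), Real.sqrt_sq_eq_abs]
      linarith [h1, h2.le, h2.ge]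
    have lip : LipschitzWith (Real.toNNReal c) (fun t : ℝ => B' (t • x) y) := by
      apply LipschitzWith.of_dist_le_mul
      intro a b
      have e : B' (a • x) y - B' (b • x) y = B' ((a - b) • x) y := by
        have : (a - b) • x + b • x = a • x := by rw [← add_smul, sub_add_cancel]
        rw [← this, hadd]; ring
      rw [Real.dist_eq, Real.dist_eq, e]
      have hc0 : (0 : ℝ) ≤ c := Real.sqrt_nonneg _
      calc |B' ((a - b) • x) y| ≤ |a - b| * c := hbd (a - b)
        _ = (Real.toNNReal c : ℝ) * |a - b| := by
            rw [Real.coe_toNNReal c hc0]; ring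
    have hcont : Continuous (fun t : ℝ => B' (t • x) y) := lip.continuous
    have hg : Continuous (fun t : ℝ => t * B' x y) := continuous_id.mul continuous_const
    have : (fun t : ℝ => B' (t • x) y) = fun t : ℝ => t * B' x y := by
      refine (Rat.denseRange_cast (𝕜 := ℝ)).equalizer hcont hg ?_
      funext q
      simp only [Function.comp_apply]
      exact hQ q x y
    exact congrFun this t
  -- assemble the bilinear form
  refine ⟨LinearMap.mk₂ ℝ B' hadd (fun c m n => by rw [hsmul, smul_eq_mul])
      (fun m n₁ n₂ => by rw [Bsymm, hadd, Bsymm n₁ m, Bsymm n₂ m])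
      (fun c m n => by rw [Bsymm, hsmul, Bsymm n m, smul_eq_mul]), ?_, ?_⟩
  · intro x y
    simp only [LinearMap.mk₂_apply]
    exact Bsymm x y
  · intro x
    simp only [LinearMap.mk₂_apply]
    exact (Bself x).symm
end

section
/- There exist δ > 0 and a monotone increasing function η : (0,δ) → (0,∞) with η(r) → 0 as r → 0, such that for every 3×3 real matrix A with |A| < δ, one has |√((I+A)ᵀ(I+A)) − (I + sym A + ½AᵀA)| ≤ η(|A|)·|sym A + ½AᵀA|. -/
open Matrix
open scoped MatrixOrder

noncomputable def frob {m : Type*} [Fintype m] (A : Matrix m m ℝ) : ℝ :=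
  Real.sqrt (∑ i, ∑ j, (A i j) ^ 2)

noncomputable def symPart {m : Type*} [Fintype m] (A : Matrix m m ℝ) : Matrix m m ℝ :=
  (1 / 2 : ℝ) • (A + Aᵀ)

attribute [local instance] Matrix.frobeniusSeminormedAddCommGroup
  Matrix.frobeniusNormedRing Matrix.frobeniusNormedSpace

section helpers

variable {n : Type*} [Fintype n] [DecidableEq n]

lemma frob_eq_norm (A : Matrix n n ℝ) : frob A = ‖A‖ := by
  rw [frob, Matrix.frobenius_norm_def, Real.sqrt_eq_rpow]
  congr 1
  refine Finset.sum_congr rfl fun i _ => Finset.sum_congr rfl fun j _ => ?_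
  rw [Real.norm_eq_abs, Real.rpow_two, sq_abs]

lemma norm_sq_trace (Y : Matrix n n ℝ) : ‖Y‖ ^ 2 = Matrix.trace (Yᴴ * Y) := by
  rw [Matrix.frobenius_norm_def, ← Real.rpow_natCast _ 2,
    ← Real.rpow_mul (by positivity)]
  norm_num
  simp only [Matrix.trace, Matrix.diag, Matrix.mul_apply, Matrix.conjTranspose_apply,
    star_trivial, Real.norm_eq_abs, Real.rpow_two, sq_abs]
  rw [Finset.sum_comm]
  simp [sq]

lemma norm_eq_of_sq_eq {a b : ℝ} (ha : 0 ≤ a) (hb : 0 ≤ b) (h : a ^ 2 = b ^ 2) : a = b := by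
  nlinarith

lemma norm_conj {U : Matrix n n ℝ} (hU : U ∈ Matrix.unitaryGroup n ℝ)
    (X : Matrix n n ℝ) : ‖U * X * star U‖ = ‖X‖ := by
  have h1 : star U * U = 1 := Matrix.mem_unitaryGroup_iff'.mp hU
  refine norm_eq_of_sq_eq (norm_nonneg _) (norm_nonneg _) ?_
  rw [norm_sq_trace, norm_sq_trace]
  have hstar : (star U : Matrix n n ℝ) = Uᴴ := rfl
  have key : (U * X * star U)ᴴ * (U * X * star U) = U * (Xᴴ * X) * Uᴴ := by
    rw [hstar]
    simp only [Matrix.conjTranspose_mul, Matrix.conjTranspose_conjTranspose]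
    have h1' : Uᴴ * U = 1 := h1
    simp only [Matrix.mul_assoc, ← Matrix.mul_assoc Uᴴ U, h1', one_mul]
  rw [key, Matrix.trace_mul_cycle, ← hstar, h1, one_mul]

lemma norm_diagonal_sq (v : n → ℝ) :
    ‖(Matrix.diagonal v : Matrix n n ℝ)‖ ^ 2 = ∑ i, v i ^ 2 := by
  rw [norm_sq_trace, Matrix.diagonal_conjTranspose]
  have : star v = v := by funext i; simp
  rw [this, Matrix.diagonal_mul_diagonal, Matrix.trace_diagonal]
  simp [sq]

lemma abs_le_norm_diagonal (v : n → ℝ) (i : n) :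
    |v i| ≤ ‖(Matrix.diagonal v : Matrix n n ℝ)‖ := by
  have h := norm_diagonal_sq v
  have h2 : v i ^ 2 ≤ ∑ j, v j ^ 2 :=
    Finset.single_le_sum (fun j _ => sq_nonneg (v j)) (Finset.mem_univ i)
  nlinarith [norm_nonneg (Matrix.diagonal v : Matrix n n ℝ), abs_nonneg (v i), sq_abs (v i)]

lemma sqrt_sub_one_sq_le {t : ℝ} (ht : 0 ≤ t) : (Real.sqrt t - 1) ^ 2 ≤ |t - 1| := by
  have hs : Real.sqrt t ^ 2 = t := Real.sq_sqrt ht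
  have hs0 : 0 ≤ Real.sqrt t := Real.sqrt_nonneg t
  rcases abs_cases (t - 1) with ⟨h, _⟩ | ⟨h, _⟩ <;> rw [h] <;> nlinarith

lemma half_smul_norm (X : Matrix n n ℝ) : ‖(1/2 : ℝ) • X‖ = ‖X‖ / 2 := by
  rw [norm_smul, Real.norm_eq_abs, abs_of_nonneg (by norm_num : (0:ℝ) ≤ 1/2)]
  ring

end helpers

/-- Taylor expansion of the matrix square root at the identity: there exist
`δ > 0` and a monotone increasing `η : (0,δ) → (0,∞)` with `η(r) → 0` as `r → 0⁺`, such
that for all 3×3 matrices `A` with `|A| < δ`,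
`|√((I+A)ᵀ(I+A)) − (I + sym A + ½AᵀA)| ≤ η(|A|)·|sym A + ½AᵀA|`. -/
theorem stmt3 :
    ∃ δ : ℝ, 0 < δ ∧ ∃ η : ℝ → ℝ,
      MonotoneOn η (Set.Ioo 0 δ) ∧
      (∀ r ∈ Set.Ioo 0 δ, 0 < η r) ∧
      Filter.Tendsto η (nhdsWithin 0 (Set.Ioi 0)) (nhds 0) ∧
      ∀ A : Matrix (Fin 3) (Fin 3) ℝ, frob A < δ →
        frob (CFC.sqrt ((1 + A)ᴴ * (1 + A))
            - (1 + symPart A + (1 / 2 : ℝ) • (Aᵀ * A)))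
          ≤ η (frob A) * frob (symPart A + (1 / 2 : ℝ) • (Aᵀ * A)) := by
  refine ⟨1/10, by norm_num, fun r => 2 * r + r ^ 2, ?_, ?_, ?_, ?_⟩
  · intro a ha b hb hab
    simp only [Set.mem_Ioo] at ha hb
    dsimp only
    nlinarith
  · intro r hr
    simp only [Set.mem_Ioo] at hr
    dsimp only
    nlinarith [hr.1]
  · have hc : Continuous (fun r : ℝ => 2 * r + r ^ 2) := by continuity
    exact (hc.tendsto' 0 0 (by norm_num)).mono_left nhdsWithin_le_nhds
  · intro A hAδ
    have hM := Matrix.posSemidef_conjTranspose_mul_self (1 + A)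
    set M : Matrix (Fin 3) (Fin 3) ℝ := (1 + A)ᴴ * (1 + A) with hMdef
    set S : Matrix (Fin 3) (Fin 3) ℝ := CFC.sqrt M with hSdef
    set B : Matrix (Fin 3) (Fin 3) ℝ := symPart A + (1 / 2 : ℝ) • (Aᵀ * A) with hBdef
    set C : Matrix (Fin 3) (Fin 3) ℝ := S - 1 with hCdef
    simp only [frob_eq_norm] at hAδ ⊢
    -- basic algebra
    have hconj : Aᴴ = Aᵀ := by
      funext i j; simp [Matrix.conjTranspose_apply]
    have hM2B : M = 1 + (2 : ℝ) • B := by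
      rw [hMdef, hBdef, symPart, Matrix.conjTranspose_add, hconj, Matrix.conjTranspose_one]
      simp only [add_mul, mul_add, one_mul, mul_one]
      module
    -- the spectral decomposition
    set U : Matrix (Fin 3) (Fin 3) ℝ := (hM.1.eigenvectorUnitary : Matrix (Fin 3) (Fin 3) ℝ)
      with hUdef
    have hUmem : U ∈ Matrix.unitaryGroup (Fin 3) ℝ := hM.1.eigenvectorUnitary.2
    set μ : Fin 3 → ℝ := hM.1.eigenvalues with hμdef
    have hUU : U * star U = 1 := Matrix.mem_unitaryGroup_iff.mp hUmem
    have hofReal : (RCLike.ofReal ∘ Real.sqrt ∘ hM.1.eigenvalues : Fin 3 → ℝ)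
        = fun i => Real.sqrt (μ i) := by
      rw [RCLike.ofReal_real_eq_id, ← hμdef]
      funext i
      simp
    have hSspec : S = U * Matrix.diagonal (fun i => Real.sqrt (μ i)) * star U := by
      rw [hSdef, CFC.sqrt_eq_real_sqrt M hM.nonneg, cfcₙ_eq_cfc, hM.1.cfc_eq,
        Matrix.IsHermitian.cfc, Unitary.conjStarAlgAut_apply, hofReal, ← hUdef]
    have hMspec : M = U * Matrix.diagonal μ * star U := by
      have h := hM.1.spectral_theorem
      rw [RCLike.ofReal_real_eq_id] at h
      rw [hUdef, hμdef]
      simpa using h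
    have hone : (1 : Matrix (Fin 3) (Fin 3) ℝ)
        = U * Matrix.diagonal (fun _ => (1:ℝ)) * star U := by
      rw [Matrix.diagonal_one, mul_one, hUU]
    have hCspec : C = U * Matrix.diagonal (fun i => Real.sqrt (μ i) - 1) * star U := by
      rw [hCdef, hSspec]
      conv_lhs => rw [hone]
      rw [show Matrix.diagonal (fun i => Real.sqrt (μ i) - 1)
          = Matrix.diagonal (fun i => Real.sqrt (μ i)) - Matrix.diagonal (fun _ => (1:ℝ)) from
        Matrix.diagonal_sub _ _ |>.symm]
      rw [Matrix.mul_sub, Matrix.sub_mul]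
    have hMIspec : M - 1 = U * Matrix.diagonal (fun i => μ i - 1) * star U := by
      rw [hMspec]
      conv_lhs => rw [hone]
      rw [show Matrix.diagonal (fun i => μ i - 1)
          = Matrix.diagonal μ - Matrix.diagonal (fun _ => (1:ℝ)) from
        Matrix.diagonal_sub _ _ |>.symm]
      rw [Matrix.mul_sub, Matrix.sub_mul]
    -- norm bound on C via eigenvalues
    have hμ0 : ∀ i, 0 ≤ μ i := fun i => hM.eigenvalues_nonneg i
    have hMI_norm : ‖M - 1‖
        = ‖(Matrix.diagonal (fun i => μ i - 1) : Matrix (Fin 3) (Fin 3) ℝ)‖ := by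
      rw [hMIspec, norm_conj hUmem]
    have hC_sq : ‖C‖ ^ 2 = ∑ i, (Real.sqrt (μ i) - 1) ^ 2 := by
      rw [hCspec, norm_conj hUmem, norm_diagonal_sq]
    have hCsq_le : ‖C‖ ^ 2 ≤ 3 * ‖M - 1‖ := by
      rw [hC_sq]
      have h1 : ∀ i, (Real.sqrt (μ i) - 1) ^ 2 ≤ ‖M - 1‖ := fun i => by
        calc (Real.sqrt (μ i) - 1) ^ 2 ≤ |μ i - 1| := sqrt_sub_one_sq_le (hμ0 i)
          _ ≤ ‖(Matrix.diagonal (fun i => μ i - 1) : Matrix (Fin 3) (Fin 3) ℝ)‖ :=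
              abs_le_norm_diagonal (fun i => μ i - 1) i
          _ = ‖M - 1‖ := hMI_norm.symm
      calc ∑ i, (Real.sqrt (μ i) - 1) ^ 2 ≤ ∑ _i : Fin 3, ‖M - 1‖ :=
            Finset.sum_le_sum fun i _ => h1 i
        _ = 3 * ‖M - 1‖ := by rw [Finset.sum_const]; simp [mul_comm]
    have hMI2B : ‖M - 1‖ = 2 * ‖B‖ := by
      have h : M - 1 = (2:ℝ) • B := by rw [hM2B]; abel
      rw [h, norm_smul, Real.norm_eq_abs, abs_of_nonneg (by norm_num : (0:ℝ) ≤ 2)]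
    -- bound on ‖B‖
    have hB_le : ‖B‖ ≤ ‖A‖ + ‖A‖ ^ 2 / 2 := by
      have h1 : ‖symPart A‖ ≤ ‖A‖ := by
        rw [symPart, half_smul_norm]
        have h := norm_add_le A Aᵀ
        rw [Matrix.frobenius_norm_transpose] at h
        linarith
      have h2 : ‖(1/2 : ℝ) • (Aᵀ * A)‖ ≤ ‖A‖ ^ 2 / 2 := by
        rw [half_smul_norm]
        have h := Matrix.frobenius_norm_mul Aᵀ A
        rw [Matrix.frobenius_norm_transpose] at h
        nlinarith [norm_nonneg A]
      calc ‖B‖ ≤ ‖symPart A‖ + ‖(1/2 : ℝ) • (Aᵀ * A)‖ := norm_add_le _ _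
        _ ≤ ‖A‖ + ‖A‖ ^ 2 / 2 := by linarith
    have hA0 : 0 ≤ ‖A‖ := norm_nonneg A
    have hB0 : 0 ≤ ‖B‖ := norm_nonneg B
    have hC0 : 0 ≤ ‖C‖ := norm_nonneg C
    have hBsmall : ‖B‖ ≤ 21 / 200 := by nlinarith
    have hC_le_one : ‖C‖ ≤ 1 := by nlinarith [hCsq_le, hMI2B]
    -- the key algebraic identity
    have hSS : S * S = M := CFC.sqrt_mul_sqrt_self M hM.nonneg
    have hCC : C * C = (2:ℝ) • B - (2:ℝ) • C := by
      rw [hCdef, Matrix.sub_mul, Matrix.mul_sub, Matrix.mul_sub, hSS, hM2B]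
      simp only [mul_one, one_mul]
      module
    have hC_eq : C = B - (1/2 : ℝ) • (C * C) := by
      rw [hCC]; module
    have hCC_norm : ‖C * C‖ ≤ ‖C‖ * ‖C‖ := Matrix.frobenius_norm_mul C C
    have hgoal_eq : S - (1 + symPart A + (1 / 2 : ℝ) • (Aᵀ * A)) = C - B := by
      rw [hCdef, hBdef]; abel
    have hCmB : C - B = -((1/2 : ℝ) • (C * C)) := by
      conv_lhs => rw [hC_eq]
      abel
    clear_value M S B C U μ
    clear hSspec hMspec hone hCspec hMIspec hMI_norm hC_sq hSS hCC hM2B hμ0 hofReal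
      hUU hUmem hMdef hSdef hBdef hCdef hUdef hμdef hM hC_eq
    have hC_le : ‖C‖ ≤ 2 * ‖B‖ := by
      have h : ‖C‖ ≤ ‖B‖ + ‖C‖ * ‖C‖ / 2 := by
        calc ‖C‖ = ‖C - B + B‖ := by rw [sub_add_cancel]
          _ = ‖-((1/2 : ℝ) • (C * C)) + B‖ := by rw [hCmB]
          _ ≤ ‖-((1/2 : ℝ) • (C * C))‖ + ‖B‖ := norm_add_le _ _
          _ = ‖C * C‖ / 2 + ‖B‖ := by rw [norm_neg, half_smul_norm]
          _ ≤ ‖B‖ + ‖C‖ * ‖C‖ / 2 := by linarith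
      nlinarith
    have hE : ‖S - (1 + symPart A + (1 / 2 : ℝ) • (Aᵀ * A))‖ ≤ ‖C‖ * ‖C‖ / 2 := by
      rw [hgoal_eq, hCmB, norm_neg, half_smul_norm]
      linarith
    calc ‖S - (1 + symPart A + (1 / 2 : ℝ) • (Aᵀ * A))‖ ≤ ‖C‖ * ‖C‖ / 2 := hE
      _ ≤ (2 * ‖B‖) * (2 * ‖B‖) / 2 := by nlinarith
      _ = 2 * ‖B‖ * ‖B‖ := by ring
      _ ≤ (2 * ‖A‖ + ‖A‖ ^ 2) * ‖B‖ := by nlinarith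
end

section
/- For every 3×3 real matrix F, |√(FᵀF) − I| ≤ dist(F, SO(3)), where dist(F, SO(3)) = inf over R ∈ SO(3) of |F − R|. Moreover, if det F > 0, then equality holds. -/
open Matrix

/-- The positive semidefinite square root of a positive semidefinite matrix
(the definition `Matrix.PosSemidef.sqrt` of the older Mathlib, since removed). -/
noncomputable def Matrix.PosSemidef.sqrt {n : Type*} [Fintype n] [DecidableEq n]
    {A : Matrix n n ℝ} (hA : A.PosSemidef) : Matrix n n ℝ :=
  hA.1.eigenvectorUnitary.1 * diagonal ((↑) ∘ (√·) ∘ hA.1.eigenvalues) *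
    (star hA.1.eigenvectorUnitary : Matrix n n ℝ)

lemma Matrix.PosSemidef.posSemidef_sqrt {n : Type*} [Fintype n] [DecidableEq n]
    {A : Matrix n n ℝ} (hA : A.PosSemidef) : hA.sqrt.PosSemidef := by
  unfold Matrix.PosSemidef.sqrt
  have hD : (diagonal ((↑) ∘ (√·) ∘ hA.1.eigenvalues) : Matrix n n ℝ).PosSemidef :=
    Matrix.posSemidef_diagonal_iff.mpr fun i => Real.sqrt_nonneg _
  have := hD.mul_mul_conjTranspose_same (hA.1.eigenvectorUnitary : Matrix n n ℝ)
  rwa [← Matrix.star_eq_conjTranspose] at this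

lemma Matrix.PosSemidef.sqrt_mul_self {n : Type*} [Fintype n] [DecidableEq n]
    {A : Matrix n n ℝ} (hA : A.PosSemidef) : hA.sqrt * hA.sqrt = A := by
  unfold Matrix.PosSemidef.sqrt
  have h1 : (star hA.1.eigenvectorUnitary : Matrix n n ℝ) * hA.1.eigenvectorUnitary = 1 :=
    Unitary.coe_star_mul_self _
  have h2 : diagonal ((↑) ∘ (√·) ∘ hA.1.eigenvalues) * diagonal ((↑) ∘ (√·) ∘ hA.1.eigenvalues)
      = (diagonal (RCLike.ofReal ∘ hA.1.eigenvalues) : Matrix n n ℝ) := by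
    rw [diagonal_mul_diagonal]; congr 1; ext i
    simp [Real.mul_self_sqrt (hA.eigenvalues_nonneg i)]
  conv_rhs => rw [hA.1.spectral_theorem, Unitary.conjStarAlgAut_apply]
  rw [show ∀ V D W : Matrix n n ℝ, V * D * W * (V * D * W) = V * (D * (W * V) * D) * W by
    intros; simp only [Matrix.mul_assoc], h1, Matrix.mul_one, h2]

/-- The set of 3×3 rotation matrices. -/
def SO3 : Set (Matrix (Fin 3) (Fin 3) ℝ) :=
  {R | Rᵀ * R = 1 ∧ R.det = 1}

/-- Distance (in Frobenius norm) from a matrix to `SO(3)`. -/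
noncomputable def distSO3 (F : Matrix (Fin 3) (Fin 3) ℝ) : ℝ :=
  sInf {d | ∃ R ∈ SO3, d = frob (F - R)}

lemma sum_sq_eq_trace (A : Matrix (Fin 3) (Fin 3) ℝ) :
    ∑ i, ∑ j, (A i j) ^ 2 = trace (Aᵀ * A) := by
  rw [Finset.sum_comm]
  simp [Matrix.trace, Matrix.diag, Matrix.mul_apply, pow_two]

lemma herm_transpose {n : Type*} [Fintype n] {A : Matrix n n ℝ} (h : A.IsHermitian) :
    Aᵀ = A := by
  rw [← conjTranspose_eq_transpose_of_trivial]; exact h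

/-- Key trace inequality: for `R` orthogonal, `tr (Rᵀ F) ≤ tr √(FᵀF)`. -/
lemma trace_key (F R : Matrix (Fin 3) (Fin 3) ℝ) (hR : Rᵀ * R = 1) :
    trace (Rᵀ * F) ≤ trace (Matrix.posSemidef_conjTranspose_mul_self F).sqrt := by
  set hP := Matrix.posSemidef_conjTranspose_mul_self F with hPdef
  set U := hP.sqrt with hUdef
  have hUherm : U.IsHermitian := hP.posSemidef_sqrt.1
  set W : Matrix (Fin 3) (Fin 3) ℝ := (hUherm.eigenvectorUnitary : Matrix (Fin 3) (Fin 3) ℝ)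
    with hWdef
  have hW1 : star W * W = 1 := Unitary.coe_star_mul_self hUherm.eigenvectorUnitary
  have hW2 : W * star W = 1 := Unitary.coe_mul_star_self hUherm.eigenvectorUnitary
  have hWT : star W = Wᵀ := by
    rw [Matrix.star_eq_conjTranspose, conjTranspose_eq_transpose_of_trivial]
  set lam := hUherm.eigenvalues with hlamdef
  have hlam_nonneg : ∀ i, 0 ≤ lam i := fun i => hP.posSemidef_sqrt.eigenvalues_nonneg i
  have hdiag : Wᵀ * U * W = diagonal lam := by
    have : star W * U * W = diagonal lam := hUherm.conjStarAlgAut_star_eigenvectorUnitary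
    rw [hWT] at this
    convert this using 2
  -- U * U = Fᵀ * F
  have hUU : U * U = Fᵀ * F := by
    rw [← Matrix.conjTranspose_eq_transpose_of_trivial F]
    exact hP.sqrt_mul_self
  -- trace (Rᵀ * F) = trace ((R*W)ᵀ * (F*W))
  have htr : trace (Rᵀ * F) = trace ((R * W)ᵀ * (F * W)) := by
    rw [Matrix.transpose_mul, ← hWT]
    calc trace (Rᵀ * F) = trace ((Rᵀ * F) * (W * star W)) := by rw [hW2, Matrix.mul_one]
      _ = trace ((Rᵀ * F * W) * star W) := by rw [Matrix.mul_assoc (Rᵀ * F)]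
      _ = trace (star W * (Rᵀ * F * W)) := (Matrix.trace_mul_comm _ _)
      _ = trace (star W * Rᵀ * (F * W)) := by simp only [Matrix.mul_assoc]
  rw [htr]
  -- the trace of U equals the sum of eigenvalues
  have htrU : trace U = ∑ i, lam i := by
    have : trace (Wᵀ * U * W) = trace U := by
      rw [Matrix.trace_mul_cycle, ← hWT, hW2, Matrix.one_mul]
    rw [← this, hdiag, Matrix.trace_diagonal]
  rw [htrU]
  -- entrywise bound
  have hdiagRW : ∀ i, ∑ k, ((R * W) k i) ^ 2 = 1 := by
    intro i
    have h1 : (R * W)ᵀ * (R * W) = 1 := by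
      rw [Matrix.transpose_mul, Matrix.mul_assoc, ← Matrix.mul_assoc Rᵀ, hR,
        Matrix.one_mul, ← hWT, hW1]
    have h2 : ((R * W)ᵀ * (R * W)) i i = 1 := by rw [h1]; exact Matrix.one_apply_eq i
    rw [← h2, Matrix.mul_apply]
    refine Finset.sum_congr rfl fun k _ => ?_
    rw [Matrix.transpose_apply, pow_two]
  have hdiagFW : ∀ i, ∑ k, ((F * W) k i) ^ 2 = (lam i) ^ 2 := by
    intro i
    have h1 : (F * W)ᵀ * (F * W) = diagonal lam * diagonal lam := by
      rw [Matrix.transpose_mul, Matrix.mul_assoc, ← Matrix.mul_assoc Fᵀ, ← hUU]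
      calc Wᵀ * (U * U * W) = Wᵀ * (U * (W * Wᵀ) * U * W) := by
            rw [← hWT, hW2, Matrix.mul_one]
        _ = (Wᵀ * U * W) * (Wᵀ * (U * W)) := by
            simp only [Matrix.mul_assoc]
        _ = diagonal lam * diagonal lam := by
            rw [← Matrix.mul_assoc Wᵀ U W, hdiag]
    have h2 : ((F * W)ᵀ * (F * W)) i i = lam i ^ 2 := by
      rw [h1, Matrix.diagonal_mul_diagonal, Matrix.diagonal_apply_eq]
      exact (pow_two _).symm
    rw [← h2, Matrix.mul_apply]
    refine Finset.sum_congr rfl fun k _ => ?_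
    rw [Matrix.transpose_apply, pow_two]
  have hterm : ∀ i, ∑ k, (R * W) k i * (F * W) k i ≤ lam i := by
    intro i
    have hcs := Finset.sum_mul_sq_le_sq_mul_sq Finset.univ
      (fun k => (R * W) k i) (fun k => (F * W) k i)
    rw [hdiagRW i, hdiagFW i, one_mul] at hcs
    calc ∑ k, (R * W) k i * (F * W) k i
        ≤ |∑ k, (R * W) k i * (F * W) k i| := le_abs_self _
      _ = Real.sqrt ((∑ k, (R * W) k i * (F * W) k i) ^ 2) := (Real.sqrt_sq_eq_abs _).symm
      _ ≤ Real.sqrt ((lam i) ^ 2) := Real.sqrt_le_sqrt hcs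
      _ = lam i := Real.sqrt_sq (hlam_nonneg i)
  have hform : trace ((R * W)ᵀ * (F * W)) = ∑ i, ∑ k, (R * W) k i * (F * W) k i := by
    rw [Matrix.trace]
    refine Finset.sum_congr rfl fun i _ => ?_
    rw [Matrix.diag_apply, Matrix.mul_apply]
    refine Finset.sum_congr rfl fun k _ => ?_
    rw [Matrix.transpose_apply]
  rw [hform]
  exact Finset.sum_le_sum fun i _ => hterm i

/-- The main inequality for each orthogonal `R`. -/
lemma frob_le (F R : Matrix (Fin 3) (Fin 3) ℝ) (hR : Rᵀ * R = 1) :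
    frob ((Matrix.posSemidef_conjTranspose_mul_self F).sqrt - 1) ≤ frob (F - R) := by
  set hP := Matrix.posSemidef_conjTranspose_mul_self F with hPdef
  set U := hP.sqrt with hUdef
  have hUherm : U.IsHermitian := hP.posSemidef_sqrt.1
  have hUT : Uᵀ = U := herm_transpose hUherm
  have hUU : U * U = Fᵀ * F := by
    rw [← Matrix.conjTranspose_eq_transpose_of_trivial F]
    exact hP.sqrt_mul_self
  apply Real.sqrt_le_sqrt
  rw [sum_sq_eq_trace, sum_sq_eq_trace]
  have htrone : trace (1 : Matrix (Fin 3) (Fin 3) ℝ) = 3 := by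
    simp [Matrix.trace_one]
  have hL : trace ((U - 1)ᵀ * (U - 1)) = trace (Fᵀ * F) - 2 * trace U + 3 := by
    rw [Matrix.transpose_sub, Matrix.transpose_one, hUT, Matrix.sub_mul, Matrix.mul_sub,
      Matrix.mul_sub, Matrix.mul_one, Matrix.one_mul, Matrix.one_mul]
    rw [Matrix.trace_sub, Matrix.trace_sub, Matrix.trace_sub, hUU, htrone]
    ring
  have htrFR : trace (Fᵀ * R) = trace (Rᵀ * F) := by
    rw [← Matrix.trace_transpose (Fᵀ * R), Matrix.transpose_mul, Matrix.transpose_transpose]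
  have hR3 : trace (Rᵀ * R) = 3 := by rw [hR, htrone]
  have hRf : trace ((F - R)ᵀ * (F - R)) = trace (Fᵀ * F) - 2 * trace (Rᵀ * F) + 3 := by
    rw [Matrix.transpose_sub, Matrix.sub_mul, Matrix.mul_sub, Matrix.mul_sub,
      Matrix.trace_sub, Matrix.trace_sub, Matrix.trace_sub, htrFR, hR3]
    ring
  rw [hL, hRf]
  have := trace_key F R hR
  linarith

/-- `|√(FᵀF) − I| ≤ dist(F, SO(3))` for every 3×3 real matrix `F`, with
equality when `det F > 0`. -/
theorem stmt4 (F : Matrix (Fin 3) (Fin 3) ℝ) :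
    frob ((Matrix.posSemidef_conjTranspose_mul_self F).sqrt - 1) ≤ distSO3 F ∧
      (0 < F.det → frob ((Matrix.posSemidef_conjTranspose_mul_self F).sqrt - 1) = distSO3 F) := by
  set hP := Matrix.posSemidef_conjTranspose_mul_self F with hPdef
  set U := hP.sqrt with hUdef
  have hUherm : U.IsHermitian := hP.posSemidef_sqrt.1
  have hUT : Uᵀ = U := herm_transpose hUherm
  have hUU : U * U = Fᵀ * F := by
    rw [← Matrix.conjTranspose_eq_transpose_of_trivial F]
    exact hP.sqrt_mul_self
  have hne : {d | ∃ R ∈ SO3, d = frob (F - R)}.Nonempty := by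
    refine ⟨frob (F - 1), 1, ⟨?_, Matrix.det_one⟩, rfl⟩
    simp
  have hlb : ∀ d ∈ {d | ∃ R ∈ SO3, d = frob (F - R)}, frob (U - 1) ≤ d := by
    rintro d ⟨R, ⟨hR, _⟩, rfl⟩
    exact frob_le F R hR
  have hineq : frob (U - 1) ≤ distSO3 F := le_csInf hne hlb
  refine ⟨hineq, fun hdet => ?_⟩
  -- equality case
  have hdetF : F.det ≠ 0 := ne_of_gt hdet
  have hdetU_nonneg : 0 ≤ U.det := by
    rw [show U.det = ∏ i, hUherm.eigenvalues i by
      have := hUherm.det_eq_prod_eigenvalues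
      simpa using this]
    exact Finset.prod_nonneg fun i _ => hP.posSemidef_sqrt.eigenvalues_nonneg i
  have hdetUsq : U.det ^ 2 = F.det ^ 2 := by
    have : (U * U).det = (Fᵀ * F).det := by rw [hUU]
    rwa [Matrix.det_mul, Matrix.det_mul, Matrix.det_transpose, ← pow_two, ← pow_two] at this
  have hdetU : U.det = F.det := by
    have h1 : U.det = Real.sqrt (U.det ^ 2) := (Real.sqrt_sq hdetU_nonneg).symm
    rw [h1, hdetUsq, Real.sqrt_sq hdet.le]
  have hUunit : IsUnit U.det := isUnit_iff_ne_zero.mpr (hdetU ▸ hdetF)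
  have hUinv1 : U * U⁻¹ = 1 := Matrix.mul_nonsing_inv U hUunit
  have hUinv2 : U⁻¹ * U = 1 := Matrix.nonsing_inv_mul U hUunit
  set Q := F * U⁻¹ with hQdef
  have hQF : Q * U = F := by
    rw [hQdef, Matrix.mul_assoc, hUinv2, Matrix.mul_one]
  have hQorth : Qᵀ * Q = 1 := by
    have hQT : Qᵀ = U⁻¹ * Fᵀ := by
      rw [hQdef, Matrix.transpose_mul, Matrix.transpose_nonsing_inv, hUT]
    rw [hQT, hQdef, Matrix.mul_assoc, ← Matrix.mul_assoc Fᵀ F U⁻¹, ← hUU,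
      Matrix.mul_assoc U U U⁻¹, hUinv1, Matrix.mul_one, hUinv2]
  have hQdet : Q.det = 1 := by
    rw [hQdef, Matrix.det_mul, Matrix.det_nonsing_inv, Ring.inverse_eq_inv', ← hdetU,
      mul_inv_cancel₀ (hdetU ▸ hdetF)]
  have hfrobQ : frob (F - Q) = frob (U - 1) := by
    have hsub : F - Q = Q * (U - 1) := by
      rw [Matrix.mul_sub, Matrix.mul_one, hQF]
    rw [hsub]
    unfold frob
    congr 1
    rw [sum_sq_eq_trace, sum_sq_eq_trace, Matrix.transpose_mul, Matrix.mul_assoc,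
      ← Matrix.mul_assoc Qᵀ Q (U - 1), hQorth, Matrix.one_mul]
  have hmem : frob (U - 1) ∈ {d | ∃ R ∈ SO3, d = frob (F - R)} :=
    ⟨Q, ⟨hQorth, hQdet⟩, hfrobQ.symm⟩
  have hbdd : BddBelow {d | ∃ R ∈ SO3, d = frob (F - R)} := ⟨frob (U - 1), hlb⟩
  exact le_antisymm hineq (csInf_le hbdd hmem)
end

section
/- Let A ⊂ ℝⁿ be an open, bounded set with Lipschitz boundary. Then A has only finitely many connected components. -/
open Metric

/-- A bounded open set `A ⊂ ℝⁿ` has Lipschitz boundary: every boundary point has a ball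
around it which is mapped by a bi-Lipschitz homeomorphism onto the unit ball, sending
`∂A` to the hyperplane slice `{yₙ = 0}` and `A` to `{yₙ > 0}`. -/
def HasLipschitzBoundary {n : ℕ} (A : Set (EuclideanSpace ℝ (Fin (n + 1)))) : Prop :=
  ∀ x ∈ frontier A, ∃ ε : ℝ, 0 < ε ∧
    ∃ f g : EuclideanSpace ℝ (Fin (n + 1)) → EuclideanSpace ℝ (Fin (n + 1)),
      ∃ K K' : NNReal,
        LipschitzOnWith K f (ball x ε) ∧
        LipschitzOnWith K' g (ball 0 1) ∧
        (∀ y ∈ ball x ε, g (f y) = y) ∧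
        (∀ y ∈ ball (0 : EuclideanSpace ℝ (Fin (n + 1))) 1, f (g y) = y) ∧
        f '' ball x ε = ball 0 1 ∧
        f '' (frontier A ∩ ball x ε) = ball 0 1 ∩ {y | y (Fin.last n) = 0} ∧
        f '' (A ∩ ball x ε) = ball 0 1 ∩ {y | 0 < y (Fin.last n)}

/-- The part of `A` in a Lipschitz-boundary chart ball is preconnected. -/
lemma preconnected_chart {n : ℕ} {A : Set (EuclideanSpace ℝ (Fin (n + 1)))}
    {x : EuclideanSpace ℝ (Fin (n + 1))} (hLip : HasLipschitzBoundary A)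
    (hx : x ∈ frontier A) :
    ∃ ε : ℝ, 0 < ε ∧ IsPreconnected (A ∩ ball x ε) := by
  obtain ⟨ε, hε, f, g, K, K', hf, hg, hgf, hfg, himg, hfr, hA⟩ := hLip x hx
  refine ⟨ε, hε, ?_⟩
  have hsub : ball (0 : EuclideanSpace ℝ (Fin (n + 1))) 1 ∩ {y | 0 < y (Fin.last n)}
      ⊆ ball 0 1 := Set.inter_subset_left
  have hconv : Convex ℝ (ball (0 : EuclideanSpace ℝ (Fin (n + 1))) 1 ∩
      {y | 0 < y (Fin.last n)}) :=
    (convex_ball _ _).inter (convex_halfSpace_gt ⟨fun a b => rfl, fun c a => rfl⟩ 0)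
  have key : A ∩ ball x ε = g '' (ball 0 1 ∩ {y | 0 < y (Fin.last n)}) := by
    rw [← hA, ← Set.image_comp]
    exact ((Set.image_congr (fun a ha => hgf a ha.2)).trans
      (Set.image_id (A ∩ ball x ε))).symm
  rw [key]
  exact hconv.isPreconnected.image g (hg.continuousOn.mono hsub)

/-- a bounded open set with Lipschitz boundary has finitely many connected
components. -/
theorem stmt5 {n : ℕ} (A : Set (EuclideanSpace ℝ (Fin (n + 1))))
    (hopen : IsOpen A) (hbdd : Bornology.IsBounded A)
    (hLip : HasLipschitzBoundary A) :
    {C : Set (EuclideanSpace ℝ (Fin (n + 1))) | ∃ x ∈ A, C = connectedComponentIn A x}.Finite := by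
  classical
  -- choose a chart radius at each frontier point
  have hchart : ∀ x ∈ frontier A, ∃ ε : ℝ, 0 < ε ∧ IsPreconnected (A ∩ ball x ε) :=
    fun x hx => preconnected_chart hLip hx
  set ε : EuclideanSpace ℝ (Fin (n + 1)) → ℝ := fun x =>
    if h : x ∈ frontier A then (hchart x h).choose else 1 with hεdef
  have hεpos : ∀ x ∈ frontier A, 0 < ε x := fun x hx => by
    simp only [hεdef, dif_pos hx]; exact (hchart x hx).choose_spec.1
  have hεconn : ∀ x ∈ frontier A, IsPreconnected (A ∩ ball x (ε x)) := fun x hx => by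
    simp only [hεdef, dif_pos hx]; exact (hchart x hx).choose_spec.2
  -- frontier A is compact
  have hfc : IsCompact (frontier A) :=
    Metric.isCompact_of_isClosed_isBounded isClosed_frontier
      (hbdd.closure.subset (frontier_subset_closure))
  obtain ⟨t, hts, htfin, hcov⟩ := hfc.elim_finite_subcover_image
    (b := frontier A) (c := fun x => ball x (ε x)) (fun x _ => isOpen_ball)
    (fun z hz => Set.mem_biUnion hz (mem_ball_self (hεpos z hz)))
  -- each component meets some chart piece, which it then contains
  have hmain : ∀ C ∈ {C : Set (EuclideanSpace ℝ (Fin (n + 1))) |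
      ∃ x ∈ A, C = connectedComponentIn A x},
      ∃ x ∈ t, (A ∩ ball x (ε x)).Nonempty ∧ A ∩ ball x (ε x) ⊆ C := by
    rintro C ⟨z, hz, rfl⟩
    set C := connectedComponentIn A z with hC
    have hCopen : IsOpen C := hopen.connectedComponentIn
    have hCsub : C ⊆ A := connectedComponentIn_subset A z
    have hCne : C.Nonempty := ⟨z, mem_connectedComponentIn hz⟩
    -- the frontier of C is nonempty
    have hfrC : (frontier C).Nonempty := by
      by_contra h
      rw [Set.not_nonempty_iff_eq_empty, ← isClopen_iff_frontier_eq_empty] at h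
      rcases isClopen_iff.mp h with h1 | h1
      · exact hCne.ne_empty h1
      · exact NormedSpace.unbounded_univ ℝ _ (h1 ▸ hbdd.subset hCsub)
    obtain ⟨w, hw⟩ := hfrC
    -- w is not in A
    have hwA : w ∉ A := by
      intro hwA
      have hwcl : w ∈ closure C := hw.1
      have : (connectedComponentIn A w ∩ C).Nonempty := by
        rw [_root_.mem_closure_iff] at hwcl
        exact hwcl _ (hopen.connectedComponentIn)
          (mem_connectedComponentIn hwA)
      obtain ⟨v, hv1, hv2⟩ := this
      have : C = connectedComponentIn A w := by
        rw [hC, connectedComponentIn_eq (x := z) (y := v) hv2,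
          connectedComponentIn_eq (x := w) (y := v) hv1]
      have hwC : w ∈ C := this ▸ mem_connectedComponentIn hwA
      exact (hCopen.frontier_eq ▸ hw).2 hwC
    have hwfr : w ∈ frontier A :=
      ⟨closure_mono hCsub hw.1, fun h => hwA (interior_subset h)⟩
    obtain ⟨x, hxt, hwx⟩ := Set.mem_iUnion₂.mp (hcov hwfr)
    refine ⟨x, hxt, ?_, ?_⟩
    · -- w ∈ closure C, ball x (ε x) open nbhd of w, so meets C ⊆ A
      obtain ⟨v, hv1, hv2⟩ := (_root_.mem_closure_iff.mp hw.1) _ isOpen_ball hwx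
      exact ⟨v, hCsub hv2, hv1⟩
    · -- A ∩ ball x (ε x) is preconnected and meets C, hence contained in C
      obtain ⟨v, hv1, hv2⟩ := (_root_.mem_closure_iff.mp hw.1) _ isOpen_ball hwx
      have hvA : v ∈ A := hCsub hv2
      have hsub := (hεconn x (hts hxt)).subset_connectedComponentIn
        (x := v) ⟨hvA, hv1⟩ Set.inter_subset_left
      rwa [← connectedComponentIn_eq (x := z) (y := v) hv2] at hsub
  -- conclude: the component set injects into the finite cover index
  have : {C : Set (EuclideanSpace ℝ (Fin (n + 1))) |
      ∃ x ∈ A, C = connectedComponentIn A x} ⊆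
      (fun x => if h : (A ∩ ball x (ε x)).Nonempty then
        connectedComponentIn A h.choose else ∅) '' t := by
    intro C hCmem
    obtain ⟨x, hxt, hne, hsub⟩ := hmain C hCmem
    refine ⟨x, hxt, ?_⟩
    beta_reduce
    rw [dif_pos hne]
    obtain ⟨z, hz, rfl⟩ := hCmem
    have h1 : hne.choose ∈ connectedComponentIn A z := hsub hne.choose_spec
    exact (connectedComponentIn_eq h1).symm
  exact Set.Finite.subset (htfin.image _) this
end

section
/- Let A ⊂ ℝⁿ be an open, bounded set with Lipschitz boundary. Then the closures of distinct connected components of A are pairwise disjoint. -/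
open Metric

/-- for a bounded open set with Lipschitz boundary, closures of distinct
connected components are pairwise disjoint. -/
theorem stmt6 {n : ℕ} (A : Set (EuclideanSpace ℝ (Fin (n + 1))))
    (hopen : IsOpen A) (hbdd : Bornology.IsBounded A)
    (hLip : HasLipschitzBoundary A) :
    ∀ x ∈ A, ∀ y ∈ A, connectedComponentIn A x ≠ connectedComponentIn A y →
      closure (connectedComponentIn A x) ∩ closure (connectedComponentIn A y) = ∅ := by
  intro x hx y hy hne
  by_contra h
  obtain ⟨z, hzx, hzy⟩ := Set.nonempty_iff_ne_empty.mpr h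
  -- first: z ∉ A
  have hzA : z ∉ A := by
    intro hzA
    have hCz : IsOpen (connectedComponentIn A z) := hopen.connectedComponentIn
    have hzmem : z ∈ connectedComponentIn A z := mem_connectedComponentIn hzA
    obtain ⟨w, hw1, hw2⟩ := (_root_.mem_closure_iff.mp hzx) _ hCz hzmem
    obtain ⟨w', hw1', hw2'⟩ := (_root_.mem_closure_iff.mp hzy) _ hCz hzmem
    have e1 : connectedComponentIn A z = connectedComponentIn A x := by
      rw [connectedComponentIn_eq hw1]
      exact (connectedComponentIn_eq hw2).symm
    have e2 : connectedComponentIn A z = connectedComponentIn A y := by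
      rw [connectedComponentIn_eq hw1']
      exact (connectedComponentIn_eq hw2').symm
    exact hne (e1 ▸ e2)
  have hzf : z ∈ frontier A := by
    constructor
    · exact closure_mono (connectedComponentIn_subset A x) hzx
    · simpa [hopen.interior_eq] using hzA
  obtain ⟨ε, hε, f, g, K, K', hf, hg, hgf, hfg, himg, hfr, hA⟩ := hLip z hzf
  -- S := A ∩ ball z ε is preconnected
  set S : Set (EuclideanSpace ℝ (Fin (n + 1))) := A ∩ ball z ε with hS
  have hSsub : S ⊆ ball z ε := Set.inter_subset_right
  have hgfS : g '' (f '' S) = S := by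
    rw [← Set.image_comp]
    have : Set.EqOn (g ∘ f) id S := fun w hw => hgf w (hSsub hw)
    rw [Set.image_congr this, Set.image_id]
  have hconv : Convex ℝ (ball (0 : EuclideanSpace ℝ (Fin (n + 1))) 1 ∩
      {y | 0 < y (Fin.last n)}) := by
    apply (convex_ball _ _).inter
    exact convex_halfSpace_gt ⟨fun _ _ => rfl, fun _ _ => rfl⟩ 0
  have hSpre : IsPreconnected S := by
    rw [← hgfS, hA]
    exact hconv.isPreconnected.image g
      (hg.continuousOn.mono Set.inter_subset_left)
  -- S meets both components
  obtain ⟨w, hw1, hw2⟩ := Metric.mem_closure_iff.mp hzx ε hε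
  obtain ⟨w', hw1', hw2'⟩ := Metric.mem_closure_iff.mp hzy ε hε
  have hwS : w ∈ S := ⟨connectedComponentIn_subset A x hw1, by
    rwa [mem_ball, dist_comm]⟩
  have hw'S : w' ∈ S := ⟨connectedComponentIn_subset A y hw1', by
    rwa [mem_ball, dist_comm]⟩
  have hSsubA : S ⊆ A := Set.inter_subset_left
  have h1 : S ⊆ connectedComponentIn A w := hSpre.subset_connectedComponentIn hwS hSsubA
  have e1 : connectedComponentIn A x = connectedComponentIn A w := connectedComponentIn_eq hw1
  have e2 : connectedComponentIn A y = connectedComponentIn A w' := connectedComponentIn_eq hw1'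
  have : w' ∈ connectedComponentIn A w := h1 hw'S
  have e3 : connectedComponentIn A w = connectedComponentIn A w' := connectedComponentIn_eq this
  exact hne (e1.trans (e3.trans e2.symm))
end

section
/- Let α : 𝒜 → [0,∞] be a non-negative increasing set function on the class 𝒜 of open subsets of a bounded open set ω ⊂ ℝⁿ with α(∅) = 0. Then α extends to a Borel measure on ω (i.e. there exists a Borel measure μ with μ(A) = α(A) for all open A ⊂ ω) if and only if α is subadditive (α(A) ≤ α(A₁)+α(A₂) whenever A ⊂ A₁ ∪ A₂), superadditive (α(A) ≥ α(A₁)+α(A₂) whenever A₁, A₂ ⊂ A are disjoint), and inner regular (α(A) = sup{α(B) : B open, closure(B) compact ⊂ A}). -/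
open MeasureTheory
open scoped ENNReal

/-- De Giorgi–Letta criterion. An increasing set function on the open
subsets of a bounded open set `ω ⊂ ℝⁿ` with `α(∅) = 0` extends to a Borel measure iff it
is subadditive, superadditive and inner regular. -/
theorem stmt12 {n : ℕ} (ω : Set (Fin n → ℝ)) (hωopen : IsOpen ω)
    (hωbdd : Bornology.IsBounded ω)
    (α : Set (Fin n → ℝ) → ℝ≥0∞)
    (hmono : ∀ A B : Set (Fin n → ℝ), IsOpen A → IsOpen B → A ⊆ B → B ⊆ ω → α A ≤ α B)
    (hempty : α ∅ = 0) :
    (∃ μ : Measure (Fin n → ℝ), ∀ A ⊆ ω, IsOpen A → μ A = α A) ↔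
      ((∀ A A₁ A₂ : Set (Fin n → ℝ), IsOpen A → IsOpen A₁ → IsOpen A₂ →
          A ⊆ ω → A₁ ⊆ ω → A₂ ⊆ ω → A ⊆ A₁ ∪ A₂ → α A ≤ α A₁ + α A₂) ∧
        (∀ A A₁ A₂ : Set (Fin n → ℝ), IsOpen A → IsOpen A₁ → IsOpen A₂ →
          A ⊆ ω → A₁ ⊆ A → A₂ ⊆ A → Disjoint A₁ A₂ → α A₁ + α A₂ ≤ α A) ∧
        (∀ A ⊆ ω, IsOpen A →
          α A = ⨆ (B : Set (Fin n → ℝ)) (_ : IsOpen B) (_ : IsCompact (closure B))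
            (_ : closure B ⊆ A), α B)) := by
  classical
  constructor
  · rintro ⟨μ, hμ⟩
    refine ⟨?_, ?_, ?_⟩
    · -- subadditivity
      intro A A₁ A₂ hA hA₁ hA₂ hAω h1ω h2ω hsub
      calc α A = μ A := (hμ A hAω hA).symm
        _ ≤ μ (A₁ ∪ A₂) := measure_mono hsub
        _ ≤ μ A₁ + μ A₂ := measure_union_le _ _
        _ = α A₁ + α A₂ := by rw [hμ A₁ h1ω hA₁, hμ A₂ h2ω hA₂]
    · -- superadditivity
      intro A A₁ A₂ hA hA₁ hA₂ hAω h1 h2 hdisj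
      calc α A₁ + α A₂ = μ A₁ + μ A₂ := by
            rw [hμ A₁ (h1.trans hAω) hA₁, hμ A₂ (h2.trans hAω) hA₂]
        _ = μ (A₁ ∪ A₂) := (measure_union hdisj hA₂.measurableSet).symm
        _ ≤ μ A := measure_mono (Set.union_subset h1 h2)
        _ = α A := hμ A hAω hA
    · -- inner regularity
      intro A hAω hA
      refine le_antisymm ?_ ?_
      · -- α A ≤ sup
        by_cases hA' : A = Set.univ
        · have hcu : IsCompact (closure A) := by
            refine Metric.isCompact_of_isClosed_isBounded isClosed_closure ?_
            rw [hA', closure_univ]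
            exact hωbdd.subset (hA' ▸ hAω)
          refine le_iSup_of_le A (le_iSup_of_le hA (le_iSup_of_le hcu
            (le_iSup_of_le (by rw [hA', closure_univ]) le_rfl)))
        · have hAc : Aᶜ.Nonempty := by
            exact Set.nonempty_compl.2 hA'
          set B : ℕ → Set (Fin n → ℝ) := fun k =>
            {x | ((k : ℝ) + 1)⁻¹ < Metric.infDist x Aᶜ} ∩ Metric.ball 0 ((k : ℝ) + 1) with hB
          have hBopen : ∀ k, IsOpen (B k) := fun k =>
            (isOpen_lt continuous_const (Metric.continuous_infDist_pt Aᶜ)).inter Metric.isOpen_ball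
          have hBcl : ∀ k, closure (B k) ⊆
              {x | ((k : ℝ) + 1)⁻¹ ≤ Metric.infDist x Aᶜ} ∩ Metric.closedBall 0 ((k : ℝ) + 1) := by
            intro k
            refine closure_minimal (fun x hx => ⟨le_of_lt (show ((k:ℝ)+1)⁻¹ < _ from hx.1), Metric.ball_subset_closedBall hx.2⟩) ?_
            exact (isClosed_le continuous_const (Metric.continuous_infDist_pt Aᶜ)).inter
              Metric.isClosed_closedBall
          have hCA : ∀ k : ℕ, {x | ((k : ℝ) + 1)⁻¹ ≤ Metric.infDist x Aᶜ} ∩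
              Metric.closedBall 0 ((k : ℝ) + 1) ⊆ A := by
            intro k x hx
            by_contra hxA
            have h0 : Metric.infDist x Aᶜ = 0 := Metric.infDist_zero_of_mem hxA
            have h1 : ((k : ℝ) + 1)⁻¹ ≤ Metric.infDist x Aᶜ := hx.1
            rw [h0] at h1
            exact absurd h1 (not_le.2 (by positivity))
          have hBcomp : ∀ k, IsCompact (closure (B k)) := by
            intro k
            refine IsCompact.of_isClosed_subset ?_ isClosed_closure (hBcl k)
            exact Metric.isCompact_of_isClosed_isBounded
              ((isClosed_le continuous_const (Metric.continuous_infDist_pt Aᶜ)).inter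
                Metric.isClosed_closedBall)
              (Metric.isBounded_closedBall.subset Set.inter_subset_right)
          have hBA : ∀ k, closure (B k) ⊆ A := fun k => (hBcl k).trans (hCA k)
          have hBmono : Monotone B := by
            intro k l hkl
            have hkl' : (k : ℝ) ≤ (l : ℝ) := Nat.cast_le.2 hkl
            refine Set.inter_subset_inter (fun x hx => ?_) (Metric.ball_subset_ball (by linarith))
            have hx' : ((k : ℝ) + 1)⁻¹ < Metric.infDist x Aᶜ := hx
            have hk : (0 : ℝ) < (k : ℝ) + 1 := by positivity
            have hle : ((l : ℝ) + 1)⁻¹ ≤ ((k : ℝ) + 1)⁻¹ := inv_anti₀ hk (by linarith)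
            exact lt_of_le_of_lt hle hx'
          have hUnion : ⋃ k, B k = A := by
            refine Set.Subset.antisymm (Set.iUnion_subset fun k =>
              (subset_closure.trans (hBA k))) ?_
            intro x hx
            have hd : 0 < Metric.infDist x Aᶜ :=
              (hA.isClosed_compl.notMem_iff_infDist_pos hAc).1 (by simpa using hx)
            obtain ⟨k, hk⟩ := exists_nat_gt (max (Metric.infDist x Aᶜ)⁻¹ ‖x‖)
            refine Set.mem_iUnion.2 ⟨k, ?_, ?_⟩
            · show ((k : ℝ) + 1)⁻¹ < Metric.infDist x Aᶜ
              have h1 : (Metric.infDist x Aᶜ)⁻¹ < (k : ℝ) + 1 :=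
                lt_of_le_of_lt (le_max_left _ _) (hk.trans (by linarith))
              have := (inv_lt_comm₀ (by positivity) (by positivity)).1 h1
              simpa using this
            · rw [mem_ball_zero_iff]
              exact lt_of_le_of_lt (le_max_right (Metric.infDist x Aᶜ)⁻¹ ‖x‖)
                (hk.trans (by linarith))
          calc α A = μ A := (hμ A hAω hA).symm
            _ = μ (⋃ k, B k) := by rw [hUnion]
            _ = ⨆ k, μ (B k) := hBmono.directed_le.measure_iUnion
            _ ≤ _ := by
                refine iSup_le fun k => ?_
                have hBω : B k ⊆ ω := (subset_closure.trans (hBA k)).trans hAω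
                rw [hμ (B k) hBω (hBopen k)]
                exact le_iSup_of_le (B k) (le_iSup_of_le (hBopen k)
                  (le_iSup_of_le (hBcomp k) (le_iSup_of_le (hBA k) le_rfl)))
      · -- sup ≤ α A
        refine iSup_le fun B => iSup_le fun hB => iSup_le fun hBc => iSup_le fun hBA => ?_
        have hBω : B ⊆ ω := (subset_closure.trans hBA).trans hAω
        calc α B = μ B := (hμ B hBω hB).symm
          _ ≤ μ A := measure_mono (subset_closure.trans hBA)
          _ = α A := hμ A hAω hA
  · rintro ⟨hsub, hsuper, hreg⟩
    set ρ : Set (Fin n → ℝ) → ℝ≥0∞ := fun A => if IsOpen A ∧ A ⊆ ω then α A else ∞ with hρ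
    have hρempty : ρ ∅ = 0 := by
      simp only [hρ]
      rw [if_pos ⟨isOpen_empty, Set.empty_subset ω⟩]
      exact hempty
    set ν : OuterMeasure (Fin n → ℝ) := OuterMeasure.ofFunction ρ hρempty with hν
    -- finite subadditivity
    have finsub : ∀ s : Finset ℕ, ∀ f : ℕ → Set (Fin n → ℝ), (∀ i, IsOpen (f i)) →
        (∀ i, f i ⊆ ω) → ∀ A : Set (Fin n → ℝ), IsOpen A → A ⊆ ω →
        A ⊆ ⋃ i ∈ s, f i → α A ≤ ∑ i ∈ s, α (f i) := by
      intro s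
      induction s using Finset.induction_on with
      | empty =>
        intro f hf hfω A hA hAω hcov
        simp only [Finset.notMem_empty, Set.iUnion_of_empty, Set.iUnion_empty,
          Set.subset_empty_iff] at hcov
        rw [hcov, hempty, Finset.sum_empty]
      | insert j s hj ih =>
        intro f hf hfω A hA hAω hcov
        rw [Finset.sum_insert hj]
        have hU : IsOpen (⋃ i ∈ s, f i) := isOpen_biUnion fun i _ => hf i
        have hUω : (⋃ i ∈ s, f i) ⊆ ω := Set.iUnion₂_subset fun i _ => hfω i
        rw [Finset.set_biUnion_insert] at hcov
        have h1 : α A ≤ α (f j) + α (⋃ i ∈ s, f i) :=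
          hsub A (f j) _ hA (hf j) hU hAω (hfω j) hUω hcov
        exact h1.trans (add_le_add_right (ih f hf hfω _ hU hUω Set.Subset.rfl) _)
    -- countable subadditivity
    have ctsub : ∀ A : Set (Fin n → ℝ), IsOpen A → A ⊆ ω → ∀ f : ℕ → Set (Fin n → ℝ),
        (∀ i, IsOpen (f i)) → (∀ i, f i ⊆ ω) → A ⊆ ⋃ i, f i → α A ≤ ∑' i, α (f i) := by
      intro A hA hAω f hf hfω hcov
      rw [hreg A hAω hA]
      refine iSup_le fun B => iSup_le fun hB => iSup_le fun hBc => iSup_le fun hBA => ?_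
      obtain ⟨s, hs⟩ := hBc.elim_finite_subcover f hf (hBA.trans hcov)
      have hBω : B ⊆ ω := (subset_closure.trans hBA).trans hAω
      exact (finsub s f hf hfω B hB hBω (subset_closure.trans hs)).trans (ENNReal.sum_le_tsum s)
    -- value of ν on open subsets of ω
    have hνA : ∀ A : Set (Fin n → ℝ), IsOpen A → A ⊆ ω → ν A = α A := by
      intro A hA hAω
      refine le_antisymm ((OuterMeasure.ofFunction_le A).trans_eq (if_pos ⟨hA, hAω⟩)) ?_
      rw [hν, OuterMeasure.ofFunction_apply]
      refine le_iInf fun f => le_iInf fun hcov => ?_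
      by_cases hgood : ∀ i, IsOpen (f i) ∧ f i ⊆ ω
      · refine (ctsub A hA hAω f (fun i => (hgood i).1) (fun i => (hgood i).2) hcov).trans
          (ENNReal.tsum_le_tsum fun i => ?_)
        rw [hρ]; simp only [if_pos (hgood i)]; exact le_rfl
      · push_neg at hgood
        obtain ⟨i, hi⟩ := hgood
        have htop : ρ (f i) = ∞ := by
          rw [hρ]; exact if_neg (by rintro ⟨h1, h2⟩; exact hi h1 h2)
        exact le_top.trans (htop ▸ ENNReal.le_tsum i)
    -- key Caratheodory estimate
    have key : ∀ (G : Set (Fin n → ℝ)), IsOpen G → ∀ f : Set (Fin n → ℝ),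
        IsOpen f → f ⊆ ω → α (f ∩ G) + ν (f \ G) ≤ α f := by
      intro G hG f hf hfω
      have hfG : IsOpen (f ∩ G) := hf.inter hG
      have hfGω : f ∩ G ⊆ ω := Set.inter_subset_left.trans hfω
      have hrw : α (f ∩ G) = ⨆ p : {B : Set (Fin n → ℝ) //
          IsOpen B ∧ IsCompact (closure B) ∧ closure B ⊆ f ∩ G}, α p.1 := by
        rw [hreg (f ∩ G) hfGω hfG]
        refine le_antisymm ?_ ?_
        · refine iSup_le fun B => iSup_le fun h1 => iSup_le fun h2 => iSup_le fun h3 => ?_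
          exact le_iSup (fun p : {B : Set (Fin n → ℝ) //
            IsOpen B ∧ IsCompact (closure B) ∧ closure B ⊆ f ∩ G} => α p.1) ⟨B, h1, h2, h3⟩
        · refine iSup_le fun p => ?_
          exact le_iSup_of_le p.1 (le_iSup_of_le p.2.1 (le_iSup_of_le p.2.2.1
            (le_iSup_of_le p.2.2.2 le_rfl)))
      have hne : Nonempty {B : Set (Fin n → ℝ) //
          IsOpen B ∧ IsCompact (closure B) ∧ closure B ⊆ f ∩ G} :=
        ⟨⟨∅, isOpen_empty, by rw [closure_empty]; exact isCompact_empty,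
          by rw [closure_empty]; exact Set.empty_subset _⟩⟩
      rw [hrw, ENNReal.iSup_add]
      refine iSup_le fun p => ?_
      obtain ⟨B, h1, h2, h3⟩ := p
      have hdiffopen : IsOpen (f \ closure B) := hf.sdiff isClosed_closure
      have hdiffω : f \ closure B ⊆ ω := Set.diff_subset.trans hfω
      have hd : ν (f \ G) ≤ α (f \ closure B) := by
        have hsub' : f \ G ⊆ f \ closure B :=
          Set.diff_subset_diff_right (h3.trans Set.inter_subset_right)
        exact (measure_mono (μ := ν) hsub').trans
          ((OuterMeasure.ofFunction_le _).trans_eq (if_pos ⟨hdiffopen, hdiffω⟩))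
      refine (add_le_add_right hd _).trans ?_
      refine hsuper f B (f \ closure B) hf h1 hdiffopen hfω
        ((subset_closure.trans h3).trans Set.inter_subset_left) Set.diff_subset ?_
      exact Set.disjoint_left.2 fun x hxB hxd => hxd.2 (subset_closure hxB)
    -- Caratheodory measurability of open sets
    have hcar : ∀ (G : Set (Fin n → ℝ)), IsOpen G → ∀ E : Set (Fin n → ℝ),
        ν (E ∩ G) + ν (E \ G) ≤ ν E := by
      intro G hG E
      conv_rhs => rw [hν, OuterMeasure.ofFunction_apply]
      refine le_iInf fun f => le_iInf fun hcov => ?_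
      by_cases hgood : ∀ i, IsOpen (f i) ∧ f i ⊆ ω
      · have h1 : ν (E ∩ G) ≤ ∑' i, α (f i ∩ G) := by
          refine le_trans (measure_mono (μ := ν) ?_) (le_trans (measure_iUnion_le fun i => f i ∩ G) ?_)
          · intro x hx
            obtain ⟨i, hi⟩ := Set.mem_iUnion.1 (hcov hx.1)
            exact Set.mem_iUnion.2 ⟨i, hi, hx.2⟩
          · refine ENNReal.tsum_le_tsum fun i => ?_
            exact (OuterMeasure.ofFunction_le _).trans_eq
              (if_pos ⟨(hgood i).1.inter hG, Set.inter_subset_left.trans (hgood i).2⟩)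
        have h2 : ν (E \ G) ≤ ∑' i, ν (f i \ G) := by
          refine le_trans (measure_mono (μ := ν) ?_) (measure_iUnion_le fun i => f i \ G)
          intro x hx
          obtain ⟨i, hi⟩ := Set.mem_iUnion.1 (hcov hx.1)
          exact Set.mem_iUnion.2 ⟨i, hi, hx.2⟩
        calc ν (E ∩ G) + ν (E \ G) ≤ (∑' i, α (f i ∩ G)) + ∑' i, ν (f i \ G) :=
              add_le_add h1 h2
          _ = ∑' i, (α (f i ∩ G) + ν (f i \ G)) := ENNReal.tsum_add.symm
          _ ≤ ∑' i, α (f i) := ENNReal.tsum_le_tsum fun i =>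
              key G hG (f i) (hgood i).1 (hgood i).2
          _ ≤ ∑' i, ρ (f i) := ENNReal.tsum_le_tsum fun i => by
              rw [hρ]; simp only [if_pos (hgood i)]; exact le_rfl
      · push_neg at hgood
        obtain ⟨i, hi⟩ := hgood
        have htop : ρ (f i) = ∞ := by
          rw [hρ]; exact if_neg (by rintro ⟨hh1, hh2⟩; exact hi hh1 hh2)
        exact le_top.trans (htop ▸ ENNReal.le_tsum i)
    have hms : (inferInstance : MeasurableSpace (Fin n → ℝ)) ≤ ν.caratheodory := by
      rw [BorelSpace.measurable_eq (α := Fin n → ℝ)]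
      exact MeasurableSpace.generateFrom_le fun G hG =>
        (OuterMeasure.isCaratheodory_iff_le ν).2 (hcar G hG)
    refine ⟨ν.toMeasure hms, fun A hAω hA => ?_⟩
    rw [toMeasure_apply ν hms hA.measurableSet]
    exact hνA A hA hAω
end
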